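/- arXiv:2002.09220 — 2 statements merged into one kernel-verified Lean document; each statement's English description precedes it below -/
import Mathlib

section
/- Let s be a signed measure on a measurable space (α, 𝒜) and let g : α → ℝ be measurable, nonnegative, and |s|-integrable. Then there exists a measurable set A ⊆ α such that s is nonnegative on all measurable subsets of A and nonpositive on all measurable subsets of Aᶜ, and the function h¹ = g·χ_A − g·χ_{Aᶜ} satisfies |h¹| ≤ g pointwise and ∫ h¹ ds = ∫ g d|s|; moreover h² = −h¹ satisfies ∫ h² ds = −∫ g d|s|. Hence the supremum and infimum of ∫ h ds over measurable h with |h| ≤ g are attained and equal ±∫ g d|s|. -/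
open MeasureTheory

/-- The integral of a real function against a signed measure `s`, defined via the
Jordan decomposition `s = s⁺ − s⁻` as `∫ f ds⁺ − ∫ f ds⁻`. -/
noncomputable def signedIntegral {α : Type*} [MeasurableSpace α]
    (s : SignedMeasure α) (f : α → ℝ) : ℝ :=
  (∫ a, f a ∂s.toJordanDecomposition.posPart) - ∫ a, f a ∂s.toJordanDecomposition.negPart

lemma aux_integrable {α : Type*} [MeasurableSpace α] {μ : Measure α} {g h : α → ℝ}
    (hh : Measurable h) (hb : ∀ a, |h a| ≤ g a) (hgi : Integrable g μ) :
    Integrable h μ :=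
  hgi.mono hh.aestronglyMeasurable (ae_of_all _ fun a => by
    simp only [Real.norm_eq_abs]; exact (hb a).trans (le_abs_self _))

lemma aux_int_le {α : Type*} [MeasurableSpace α] {μ : Measure α} {g h : α → ℝ}
    (hh : Measurable h) (hb : ∀ a, |h a| ≤ g a) (hgi : Integrable g μ) :
    ∫ a, h a ∂μ ≤ ∫ a, g a ∂μ :=
  integral_mono (aux_integrable hh hb hgi) hgi fun a => (le_abs_self _).trans (hb a)

/-- For `g ≥ 0` measurable and `|s|`-integrable there is a Hahn positive set `A`
for `s` such that `h¹ = g·χ_A − g·χ_{Aᶜ}` satisfies `|h¹| ≤ g` and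
`∫ h¹ ds = ∫ g d|s|`, while `h² = −h¹` satisfies `∫ h² ds = −∫ g d|s|`; hence the
sup and inf of `∫ h ds` over measurable `h` with `|h| ≤ g` are attained and equal
`±∫ g d|s|`. -/
theorem exists_hahn_set_signedIntegral_extreme_weighted {α : Type*} [MeasurableSpace α]
    (s : SignedMeasure α) (g : α → ℝ) (hg_meas : Measurable g)
    (hg_nonneg : ∀ a, 0 ≤ g a) (hg_int : Integrable g s.totalVariation) :
    ∃ A : Set α, MeasurableSet A ∧
      (∀ B : Set α, MeasurableSet B → B ⊆ A → 0 ≤ s B) ∧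
      (∀ B : Set α, MeasurableSet B → B ⊆ Aᶜ → s B ≤ 0) ∧
      (∀ a, |g a * A.indicator (fun _ => (1 : ℝ)) a
              - g a * Aᶜ.indicator (fun _ => (1 : ℝ)) a| ≤ g a) ∧
      signedIntegral s
          (fun a => g a * A.indicator (fun _ => (1 : ℝ)) a
              - g a * Aᶜ.indicator (fun _ => (1 : ℝ)) a)
        = (∫ a, g a ∂s.totalVariation) ∧
      signedIntegral s
          (fun a => -(g a * A.indicator (fun _ => (1 : ℝ)) a
              - g a * Aᶜ.indicator (fun _ => (1 : ℝ)) a))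
        = -(∫ a, g a ∂s.totalVariation) ∧
      IsGreatest {r : ℝ | ∃ h : α → ℝ, Measurable h ∧ (∀ a, |h a| ≤ g a) ∧
          signedIntegral s h = r} (∫ a, g a ∂s.totalVariation) ∧
      IsLeast {r : ℝ | ∃ h : α → ℝ, Measurable h ∧ (∀ a, |h a| ≤ g a) ∧
          signedIntegral s h = r} (-(∫ a, g a ∂s.totalVariation)) := by
  set μ := s.toJordanDecomposition.posPart with hμ
  set ν := s.toJordanDecomposition.negPart with hν
  have htv : s.totalVariation = μ + ν := rfl
  obtain ⟨u, hu_meas, hμu, hνuc⟩ := s.toJordanDecomposition.mutuallySingular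
  have hsB : ∀ B : Set α, MeasurableSet B → s B = (μ B).toReal - (ν B).toReal := by
    intro B hB
    conv_lhs => rw [← s.toSignedMeasure_toJordanDecomposition]
    rw [JordanDecomposition.toSignedMeasure, Measure.toSignedMeasure_sub_apply hB]
    rfl
  have hμ_le : μ ≤ s.totalVariation := htv ▸ Measure.le_add_right le_rfl
  have hν_le : ν ≤ s.totalVariation := htv ▸ Measure.le_add_left le_rfl
  have hgμ : Integrable g μ := hg_int.mono_measure hμ_le
  have hgν : Integrable g ν := hg_int.mono_measure hν_le
  -- a.e. facts
  have hμae : ∀ᵐ a ∂μ, a ∈ uᶜ := by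
    rw [ae_iff]
    simpa using hμu
  have hνae : ∀ᵐ a ∂ν, a ∈ u := by
    rw [ae_iff]
    exact hνuc
  set h1 : α → ℝ := fun a => g a * (uᶜ).indicator (fun _ => (1 : ℝ)) a
      - g a * (uᶜ)ᶜ.indicator (fun _ => (1 : ℝ)) a with hh1
  have h1g : ∀ᵐ a ∂μ, h1 a = g a := by
    filter_upwards [hμae] with a ha
    simp [hh1, Set.indicator_of_mem ha, Set.indicator_of_notMem (by simpa using ha)]
  have h1ng : ∀ᵐ a ∂ν, h1 a = -g a := by
    filter_upwards [hνae] with a ha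
    have ha' : a ∉ uᶜ := by simpa using ha
    simp [hh1, Set.indicator_of_notMem ha', compl_compl, Set.indicator_of_mem ha]
  have habs : ∀ a, |h1 a| ≤ g a := by
    intro a
    by_cases ha : a ∈ uᶜ
    · simp [hh1, Set.indicator_of_mem ha, Set.indicator_of_notMem (by simpa using ha),
        abs_of_nonneg (hg_nonneg a)]
    · have ha' : a ∈ u := by simpa using ha
      simp [hh1, Set.indicator_of_notMem ha, compl_compl, Set.indicator_of_mem ha',
        abs_neg, abs_of_nonneg (hg_nonneg a)]
  have h1meas : Measurable h1 := by
    apply Measurable.sub <;>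
      exact hg_meas.mul (measurable_const.indicator (by measurability))
  have hint_tv : ∫ a, g a ∂s.totalVariation = (∫ a, g a ∂μ) + ∫ a, g a ∂ν := by
    rw [htv, integral_add_measure hgμ hgν]
  have hsig : signedIntegral s h1 = ∫ a, g a ∂s.totalVariation := by
    rw [signedIntegral, ← hμ, ← hν, integral_congr_ae h1g, integral_congr_ae h1ng,
      hint_tv, integral_neg]
    ring
  have hnonneg : ∀ B : Set α, MeasurableSet B → B ⊆ uᶜ → 0 ≤ s B := by
    intro B hB hBsub
    have : ν B = 0 := measure_mono_null (hBsub.trans (by simp)) hνuc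
    rw [hsB B hB, this]
    simp
  have hnonpos : ∀ B : Set α, MeasurableSet B → B ⊆ (uᶜ)ᶜ → s B ≤ 0 := by
    intro B hB hBsub
    have : μ B = 0 := measure_mono_null (hBsub.trans (by simp)) hμu
    rw [hsB B hB, this]
    simp [ENNReal.toReal_nonneg]
  have hub : ∀ r ∈ {r : ℝ | ∃ h : α → ℝ, Measurable h ∧ (∀ a, |h a| ≤ g a) ∧
      signedIntegral s h = r}, r ≤ ∫ a, g a ∂s.totalVariation := by
    rintro r ⟨h, hhm, hhb, rfl⟩
    rw [signedIntegral, ← hμ, ← hν, hint_tv]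
    have h1' : ∫ a, h a ∂μ ≤ ∫ a, g a ∂μ := aux_int_le hhm hhb hgμ
    have h2' : -∫ a, h a ∂ν ≤ ∫ a, g a ∂ν := by
      rw [← integral_neg]
      exact aux_int_le hhm.neg (fun a => by simpa using hhb a) hgν
    linarith
  refine ⟨uᶜ, hu_meas.compl, hnonneg, hnonpos, habs, hsig, ?_, ⟨⟨h1, h1meas, habs, hsig⟩, hub⟩,
    ⟨⟨fun a => -h1 a, h1meas.neg, fun a => by simpa using habs a, ?_⟩, ?_⟩⟩
  · rw [signedIntegral, ← hμ, ← hν] at hsig ⊢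
    simp only [integral_neg]
    linarith
  · rw [signedIntegral, ← hμ, ← hν] at hsig ⊢
    simp only [integral_neg]
    linarith
  · rintro r ⟨h, hhm, hhb, rfl⟩
    have := hub _ ⟨fun a => -h a, hhm.neg, fun a => by simpa using hhb a, rfl⟩
    rw [signedIntegral, ← hμ, ← hν] at this ⊢
    simp only [integral_neg] at this
    linarith
end

section
/- Let s be a signed measure on a measurable space (α, 𝒜) and let g : α → ℝ be measurable, nonnegative, and |s|-integrable. Then the set of all values ∫ h ds, where h ranges over all measurable functions h : α → ℝ with |h(a)| ≤ g(a) for all a ∈ α, is exactly the closed interval [−∫ g d|s|, ∫ g d|s|]. -/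
open MeasureTheory

/-- For `g ≥ 0` measurable and `|s|`-integrable, the set of values `∫ h ds` over
measurable `h` with `|h| ≤ g` pointwise is exactly the closed interval
`[−∫ g d|s|, ∫ g d|s|]`. -/
theorem signedIntegral_range_eq_Icc_weighted {α : Type*} [MeasurableSpace α]
    (s : SignedMeasure α) (g : α → ℝ) (hg_meas : Measurable g)
    (hg_nonneg : ∀ a, 0 ≤ g a) (hg_int : Integrable g s.totalVariation) :
    {r : ℝ | ∃ h : α → ℝ, Measurable h ∧ (∀ a, |h a| ≤ g a) ∧ signedIntegral s h = r}
      = Set.Icc (-(∫ a, g a ∂s.totalVariation)) (∫ a, g a ∂s.totalVariation) := by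
  classical
  set P := s.toJordanDecomposition.posPart with hP
  set N := s.toJordanDecomposition.negPart with hN
  have htv : s.totalVariation = P + N := rfl
  rw [htv] at hg_int ⊢
  have hgP : Integrable g P := (integrable_add_measure.mp hg_int).1
  have hgN : Integrable g N := (integrable_add_measure.mp hg_int).2
  have hI : (∫ a, g a ∂(P + N)) = (∫ a, g a ∂P) + ∫ a, g a ∂N :=
    integral_add_measure hgP hgN
  set I := (∫ a, g a ∂(P + N)) with hIdef
  ext r
  simp only [Set.mem_setOf_eq, Set.mem_Icc]
  constructor
  · rintro ⟨h, hmeas, hle, rfl⟩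
    have hhP : Integrable h P :=
      hgP.mono' hmeas.aestronglyMeasurable (Filter.Eventually.of_forall fun a => by
        simpa using hle a)
    have hhN : Integrable h N :=
      hgN.mono' hmeas.aestronglyMeasurable (Filter.Eventually.of_forall fun a => by
        simpa using hle a)
    have hb : |signedIntegral s h| ≤ I := by
      rw [signedIntegral, hI]
      calc |(∫ a, h a ∂P) - ∫ a, h a ∂N| ≤ |∫ a, h a ∂P| + |∫ a, h a ∂N| :=
            abs_sub _ _
        _ ≤ (∫ a, g a ∂P) + ∫ a, g a ∂N := by
            gcongr
            · calc |∫ a, h a ∂P| ≤ ∫ a, |h a| ∂P := by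
                    simpa using norm_integral_le_integral_norm (μ := P) h
                _ ≤ ∫ a, g a ∂P := integral_mono hhP.abs hgP hle
            · calc |∫ a, h a ∂N| ≤ ∫ a, |h a| ∂N := by
                    simpa using norm_integral_le_integral_norm (μ := N) h
                _ ≤ ∫ a, g a ∂N := integral_mono hhN.abs hgN hle
    exact abs_le.mp hb
  · rintro ⟨hr1, hr2⟩
    have hInonneg : 0 ≤ I := by
      rw [hIdef]
      exact integral_nonneg hg_nonneg
    rcases eq_or_lt_of_le hInonneg with hI0 | hIpos
    · refine ⟨0, measurable_const, fun a => by simpa using hg_nonneg a, ?_⟩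
      simp only [signedIntegral, integral_zero, sub_zero]
      have : r = 0 := le_antisymm (by linarith) (by linarith)
      simp [this]
    · set t := r / I with ht
      have ht1 : |t| ≤ 1 := by
        rw [abs_div, abs_of_pos hIpos, div_le_one hIpos]
        exact abs_le.mpr ⟨hr1, hr2⟩
      obtain ⟨u, hu_meas, hPu, hNuc⟩ := s.toJordanDecomposition.mutuallySingular
      refine ⟨fun a => if a ∈ u then -(t * g a) else t * g a, ?_, ?_, ?_⟩
      · exact Measurable.ite hu_meas ((measurable_const.mul hg_meas).neg)
          (measurable_const.mul hg_meas)
      · intro a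
        have : |t * g a| ≤ g a := by
          rw [abs_mul, abs_of_nonneg (hg_nonneg a)]
          nlinarith [hg_nonneg a]
        by_cases hau : a ∈ u <;> simpa [hau, abs_neg] using this
      · have heqP : (fun a => if a ∈ u then -(t * g a) else t * g a)
            =ᵐ[P] fun a => t * g a := by
          filter_upwards [measure_eq_zero_iff_ae_notMem.mp hPu] with a ha
          simp [ha]
        have heqN : (fun a => if a ∈ u then -(t * g a) else t * g a)
            =ᵐ[N] fun a => -(t * g a) := by
          have : ∀ᵐ a ∂N, a ∈ u := by
            filter_upwards [measure_eq_zero_iff_ae_notMem.mp hNuc] with a ha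
            simpa using ha
          filter_upwards [this] with a ha
          simp [ha]
        rw [signedIntegral, ← hP, ← hN, integral_congr_ae heqP, integral_congr_ae heqN,
          integral_neg, integral_const_mul, integral_const_mul]
        have : t * (∫ a, g a ∂P) - -(t * ∫ a, g a ∂N) = t * I := by
          rw [hI]; ring
        rw [this, ht]
        field_simp
end
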